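/- Let k > 1 and Λ = Σ λ_i ≥ 3, with λ₁ > 0, λ_k > 0. Then the a-Zeckendorf representation system is not a place value system: there is no sequence of place values c_0 < c_1 < ⋯ with c_0 = 1 such that every positive integer N with a-Zeckendorf representation d_M,…,d_0 satisfies N = Σ_{i=0}^M d_i c_i. Concretely, the number whose a-Zeckendorf representation is the two-digit string "2 0" is not equal to 2·a_1. -/

import Mathlib

/-- `Λ_j = λ₁ + ⋯ + λ_j`. -/
def Lam (lam : ℕ → ℕ) (j : ℕ) : ℕ := ∑ i ∈ Finset.Icc 1 j, lam i

/-- `μ_ℓ` is the minimum index `j` with `Λ_j > ℓ`. -/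
noncomputable def mu (lam : ℕ → ℕ) (ℓ : ℕ) : ℕ := sInf {j : ℕ | ℓ < Lam lam j}

/-- An `a`-valid digit sequence, as a list `[d_0, d_1, …, d_M]`
(least significant digit first). -/
def AValid (lam : ℕ → ℕ) (k : ℕ) (l : List ℕ) : Prop :=
  l ≠ [] ∧ (∀ x ∈ l, x < Lam lam k) ∧ l.getLast? ≠ some 0 ∧
  ∀ i j : ℕ, i < j → j < i + mu lam (l.getD i 0) → j < l.length → l.getD j 0 = 0

/-- Length-then-lexicographic order on digit sequences. -/
def ZOrd (l₁ l₂ : List ℕ) : Prop :=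
  l₁.length < l₂.length ∨
    (l₁.length = l₂.length ∧ List.Lex (· < ·) l₁.reverse l₂.reverse)

section aux
variable {k : ℕ} {lam : ℕ → ℕ}

lemma Lam_one : Lam lam 1 = lam 1 := by simp [Lam]

lemma lam_sum_le (hk : 1 < k) : lam 1 + lam k ≤ Lam lam k := by
  have h : ({1, k} : Finset ℕ) ⊆ Finset.Icc 1 k := by
    intro x hx; simp at hx; rcases hx with rfl | rfl <;> simp <;> omega
  calc lam 1 + lam k = ∑ i ∈ ({1, k} : Finset ℕ), lam i := by
        rw [Finset.sum_pair (by omega)]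
    _ ≤ Lam lam k := Finset.sum_le_sum_of_subset h

lemma lam1_le (hk : 1 ≤ k) : lam 1 ≤ Lam lam k :=
  Finset.single_le_sum (f := lam) (fun i _ => Nat.zero_le _) (by simp [hk])

lemma mu_eq_one {d : ℕ} (hd : d < lam 1) : mu lam d = 1 := by
  have hmem : 1 ∈ {j : ℕ | d < Lam lam j} := by simpa [Lam_one] using hd
  refine le_antisymm (Nat.sInf_le hmem) ?_
  rcases Nat.eq_zero_or_pos (sInf {j : ℕ | d < Lam lam j}) with h | h
  · exfalso
    have := Nat.sInf_mem (⟨1, hmem⟩ : Set.Nonempty {j : ℕ | d < Lam lam j})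
    rw [h] at this
    simp [Lam] at this
  · exact h

lemma two_le_mu {d : ℕ} (hd : lam 1 ≤ d) (hdΛ : d < Lam lam k) : 2 ≤ mu lam d := by
  have hne : Set.Nonempty {j : ℕ | d < Lam lam j} := ⟨k, hdΛ⟩
  have hmem := Nat.sInf_mem hne
  by_contra h
  push_neg at h
  have hmem' : d < Lam lam (mu lam d) := hmem
  have h2 : mu lam d = 0 ∨ mu lam d = 1 := by omega
  rcases h2 with h' | h' <;> rw [h'] at hmem'
  · simp [Lam] at hmem'
  · rw [Lam_one] at hmem'; omega

lemma valid_single {d : ℕ} : AValid lam k [d] ↔ 1 ≤ d ∧ d < Lam lam k := by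
  constructor
  · rintro ⟨-, h2, h3, -⟩
    refine ⟨?_, h2 d (by simp)⟩
    rcases Nat.eq_zero_or_pos d with rfl | h
    · simp [List.getLast?] at h3
    · exact h
  · rintro ⟨h1, h2⟩
    refine ⟨by simp, by simpa using h2, by simp [List.getLast?]; omega, ?_⟩
    intro i j hij hj hlen
    simp at hlen; omega

lemma valid_pair' {d b : ℕ} (hk : 1 ≤ k) (hb : 1 ≤ b) (hbΛ : b < Lam lam k) :
    AValid lam k [d, b] ↔ d < lam 1 := by
  constructor
  · rintro ⟨-, h2, -, h4⟩
    by_contra hd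
    push_neg at hd
    have hdΛ : d < Lam lam k := h2 d (by simp)
    have hmu : 2 ≤ mu lam d := two_le_mu hd hdΛ
    have := h4 0 1 (by omega) (by simpa using by omega : 1 < 0 + mu lam ([d, b].getD 0 0))
      (by simp)
    simp at this
    omega
  · intro hd
    have hdΛ : d < Lam lam k := lt_of_lt_of_le hd (lam1_le hk)
    refine ⟨by simp, ?_, by simp [List.getLast?]; omega, ?_⟩
    · intro x hx; simp at hx; rcases hx with rfl | rfl <;> omega
    · intro i j hij hj hlen
      simp at hlen
      have hi : i = 0 := by omega
      have hj1 : j = 1 := by omega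
      subst hi; subst hj1
      rw [show ([d, b].getD 0 0) = d from rfl, mu_eq_one hd] at hj
      omega

lemma valid_pair {d : ℕ} (hk : 1 ≤ k) (hΛ' : 1 < Lam lam k) :
    AValid lam k [d, 1] ↔ d < lam 1 := valid_pair' hk le_rfl hΛ'



lemma set_eq2 (hk : 1 ≤ k) (hΛ' : 1 < Lam lam k) :
    {l' : List ℕ | AValid lam k l' ∧ ZOrd l' [0, 2]} =
      ↑(((Finset.Icc 1 (Lam lam k - 1)).image fun d => [d]) ∪
        ((Finset.range (lam 1)).image fun d => [d, 1])) := by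
  ext l
  simp only [Set.mem_setOf_eq, Finset.coe_union, Set.mem_union, Finset.coe_image,
    Set.mem_image, Finset.mem_coe, Finset.mem_Icc, Finset.mem_range]
  constructor
  · rintro ⟨hv, ho⟩
    rcases ho with hlen | ⟨hlen, hlex⟩
    · have hne := hv.1
      have h1 : l.length = 1 := by
        have := List.length_pos_iff.mpr hne
        simp only [List.length_cons, List.length_nil] at hlen
        omega
      obtain ⟨d, rfl⟩ := List.length_eq_one_iff.mp h1
      obtain ⟨hd1, hd2⟩ := valid_single.mp hv
      exact Or.inl ⟨d, ⟨hd1, by omega⟩, rfl⟩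
    · have h2 : l.length = 2 := by simpa using hlen
      obtain ⟨d0, d1, rfl⟩ := List.length_eq_two.mp h2
      simp only [List.reverse_cons, List.reverse_nil, List.nil_append,
        List.cons_append] at hlex
      have hne0 : d1 ≠ 0 := by
        have h3 := hv.2.2.1
        simp [List.getLast?] at h3
        exact h3
      have hd1 : d1 = 1 := by
        cases hlex with
        | rel h => omega
        | cons h =>
          cases h with
          | rel h => omega
          | cons h => cases h
      subst hd1
      exact Or.inr ⟨d0, (valid_pair hk hΛ').mp hv, rfl⟩
  · rintro (⟨d, ⟨hd1, hd2⟩, rfl⟩ | ⟨d, hd, rfl⟩)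
    · exact ⟨valid_single.mpr ⟨hd1, by omega⟩, Or.inl (by simp)⟩
    · refine ⟨(valid_pair hk hΛ').mpr hd, Or.inr ⟨by simp, ?_⟩⟩
      simp only [List.reverse_cons, List.reverse_nil, List.nil_append, List.cons_append]
      exact List.Lex.rel (by omega)

lemma set_eq1 (hk : 1 ≤ k) (hΛ' : 1 < Lam lam k) :
    {l' : List ℕ | AValid lam k l' ∧ ZOrd l' [0, 1]} =
      ↑((Finset.Icc 1 (Lam lam k - 1)).image fun d => [d]) := by
  ext l
  simp only [Set.mem_setOf_eq, Finset.coe_image, Set.mem_image, Finset.mem_coe,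
    Finset.mem_Icc]
  constructor
  · rintro ⟨hv, ho⟩
    rcases ho with hlen | ⟨hlen, hlex⟩
    · have hne := hv.1
      have h1 : l.length = 1 := by
        have := List.length_pos_iff.mpr hne
        simp only [List.length_cons, List.length_nil] at hlen
        omega
      obtain ⟨d, rfl⟩ := List.length_eq_one_iff.mp h1
      obtain ⟨hd1, hd2⟩ := valid_single.mp hv
      exact ⟨d, ⟨hd1, by omega⟩, rfl⟩
    · exfalso
      have h2 : l.length = 2 := by simpa using hlen
      obtain ⟨d0, d1, rfl⟩ := List.length_eq_two.mp h2
      simp only [List.reverse_cons, List.reverse_nil, List.nil_append,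
        List.cons_append] at hlex
      have hne0 : d1 ≠ 0 := by
        have h3 := hv.2.2.1
        simp [List.getLast?] at h3
        exact h3
      cases hlex with
      | rel h => omega
      | cons h =>
        cases h with
        | rel h => omega
        | cons h => cases h
  · rintro ⟨d, ⟨hd1, hd2⟩, rfl⟩
    exact ⟨valid_single.mpr ⟨hd1, by omega⟩, Or.inl (by simp)⟩

lemma ncard1 (hk : 1 ≤ k) (hΛ' : 1 < Lam lam k) :
    Set.ncard {l' : List ℕ | AValid lam k l' ∧ ZOrd l' [0, 1]} = Lam lam k - 1 := by
  rw [set_eq1 hk hΛ', Set.ncard_coe_finset, Finset.card_image_of_injective _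
    (fun a b h => by simpa using h)]
  simp

lemma ncard2 (hk : 1 ≤ k) (hΛ' : 1 < Lam lam k) :
    Set.ncard {l' : List ℕ | AValid lam k l' ∧ ZOrd l' [0, 2]} =
      Lam lam k - 1 + lam 1 := by
  rw [set_eq2 hk hΛ', Set.ncard_coe_finset, Finset.card_union_of_disjoint,
    Finset.card_image_of_injective _ (fun a b h => by simpa using h),
    Finset.card_image_of_injective _ (fun a b h => by simpa using (h : [a,1]=[b,1]))]
  · simp
  · rw [Finset.disjoint_left]
    rintro x hx hx'
    simp only [Finset.mem_image] at hx hx'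
    obtain ⟨d, -, rfl⟩ := hx
    obtain ⟨d', -, h⟩ := hx'
    simp at h

end aux

/-- if `k > 1` and `Λ ≥ 3`, then the `a`-Zeckendorf system is
not a place value system: there is no strictly increasing sequence of place
values `c_0 = 1 < c_1 < ⋯` such that the `N`-th `a`-valid sequence
`d_M, …, d_0` always satisfies `N = ∑ d_i c_i`.  Concretely, the number whose
`a`-Zeckendorf representation is the two-digit string `"2 0"` (the list
`[0, 2]`, least significant digit first) is not equal to `2·a_1`. -/
theorem stmt14 (k : ℕ) (lam : ℕ → ℕ) (hk : 1 < k)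
    (h1 : 1 ≤ lam 1) (hkpos : 1 ≤ lam k) (hzero : ∀ i, k < i → lam i = 0)
    (hΛ : 3 ≤ Lam lam k)
    (a : ℤ → ℤ)
    (ha0 : ∀ i : ℤ, i ≤ 0 → a i = 1)
    (harec : ∀ n : ℤ, 1 ≤ n → a n = ∑ i ∈ Finset.Icc 1 k, (lam i : ℤ) * a (n - i)) :
    (¬ ∃ c : ℕ → ℤ, StrictMono c ∧ c 0 = 1 ∧
      ∀ (N : ℕ) (l : List ℕ), 1 ≤ N → AValid lam k l →
        Set.ncard {l' : List ℕ | AValid lam k l' ∧ ZOrd l' l} = N - 1 →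
        (N : ℤ) = ∑ i ∈ Finset.range l.length, (l.getD i 0 : ℤ) * c i) ∧
    ∀ N : ℕ, 1 ≤ N →
      Set.ncard {l' : List ℕ | AValid lam k l' ∧ ZOrd l' [0, 2]} = N - 1 →
      (N : ℤ) ≠ 2 * a 1 := by
  have hk1 : 1 ≤ k := by omega
  have hΛ' : 1 < Lam lam k := by omega
  have hlt : lam 1 < Lam lam k := by
    have := lam_sum_le (lam := lam) hk
    omega
  have ha1 : a 1 = (Lam lam k : ℤ) := by
    rw [harec 1 le_rfl]
    have hterm : ∀ i ∈ Finset.Icc 1 k, (lam i : ℤ) * a (1 - i) = (lam i : ℤ) := by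
      intro i hi
      simp only [Finset.mem_Icc] at hi
      rw [ha0 (1 - (i : ℤ)) (by omega), mul_one]
    rw [Finset.sum_congr rfl hterm]
    simp [Lam]
  constructor
  · rintro ⟨c, hmono, hc0, hc⟩
    have hv1 : AValid lam k [0, 1] := (valid_pair hk1 hΛ').mpr (by omega)
    have hv2 : AValid lam k [0, 2] :=
      (valid_pair' hk1 (by omega) (by omega)).mpr (by omega)
    have h1 := hc (Lam lam k) [0, 1] (by omega) hv1 (by rw [ncard1 hk1 hΛ'])
    have h2 := hc (Lam lam k + lam 1) [0, 2] (by omega) hv2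
      (by rw [ncard2 hk1 hΛ']; omega)
    simp [Finset.sum_range_succ] at h1 h2
    have hlt' : (lam 1 : ℤ) < (Lam lam k : ℤ) := by exact_mod_cast hlt
    push_cast at h2
    omega
  · intro N hN hcard
    rw [ncard2 hk1 hΛ'] at hcard
    have hN' : N = Lam lam k + lam 1 := by omega
    rw [ha1, hN']
    have hlt' : (lam 1 : ℤ) < (Lam lam k : ℤ) := by exact_mod_cast hlt
    push_cast
    omega
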